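/- Let V be an (n+1)-dimensional real vector space with Galilei structure (τ, h) and v a unit timelike vector. Then there exists a unique symmetric bilinear form h_v on V (the covariant space metric with respect to v) such that h_v(v, ·) = 0 and such that, viewing h as a map V* → V and h_v as a map V → V*, the composition h ∘ h_v equals the spatial projector P (where P(X) = X − τ(X)v). -/

import Mathlib

/-- On an `(n+1)`-dimensional vector space with Galilei structure `(τ, h)`
(`h` viewed as a map `V* → V`, symmetric, positive semidefinite, with kernel spanned by `τ`),
for each unit timelike `v` there exists a unique symmetric bilinear form `h_v` on `V`
(viewed as a map `V → V*`) with `h_v(v,·) = 0` and `h ∘ h_v = P`, the spatial projector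
`P(X) = X − τ(X)·v`. -/
theorem covariant_space_metric_exists_unique
    {V : Type*} [AddCommGroup V] [Module ℝ V] [FiniteDimensional ℝ V]
    (n : ℕ) (hdim : Module.finrank ℝ V = n + 1)
    (τ : Module.Dual ℝ V) (hτ : τ ≠ 0)
    (h : Module.Dual ℝ V →ₗ[ℝ] V)
    (hsymm : ∀ α β : Module.Dual ℝ V, α (h β) = β (h α))
    (hpsd : ∀ α : Module.Dual ℝ V, 0 ≤ α (h α))
    (hτh : h τ = 0)
    (hker : ∀ α : Module.Dual ℝ V, h α = 0 → ∃ c : ℝ, α = c • τ)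
    (v : V) (hv : τ v = 1) :
    ∃! hcov : V →ₗ[ℝ] Module.Dual ℝ V,
      (∀ X Y : V, hcov X Y = hcov Y X) ∧ hcov v = 0 ∧
      h ∘ₗ hcov = LinearMap.id - τ.smulRight v := by
  classical
  set P : V →ₗ[ℝ] V := LinearMap.id - τ.smulRight v with hP
  have hPv : ∀ X, P X = X - τ X • v := fun X => rfl
  -- A = functionals vanishing at v
  set A : Submodule ℝ (Module.Dual ℝ V) := LinearMap.ker (Module.Dual.eval ℝ V v) with hA
  have memA : ∀ α : Module.Dual ℝ V, α ∈ A ↔ α v = 0 := fun α => Iff.rfl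
  -- W = ker τ
  set W : Submodule ℝ V := LinearMap.ker τ with hW
  have hτP : ∀ X, τ (P X) = 0 := by
    intro X
    simp [hPv, hv, map_sub]
  -- h maps A into W
  have hhW : ∀ α : Module.Dual ℝ V, α ∈ A → h α ∈ W := by
    intro α _
    show τ (h α) = 0
    rw [hsymm τ α, hτh, map_zero]
  set f : A →ₗ[ℝ] W := (h.domRestrict A).codRestrict W (fun a => hhW a.1 a.2) with hf
  have hfval : ∀ a : A, (f a : V) = h a.1 := fun a => rfl
  have finj : Function.Injective f := by
    intro a b hab
    have hz : h (a.1 - b.1) = 0 := by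
      have := congrArg (Subtype.val) hab
      rw [map_sub, hfval, hfval] at *
      rw [this, sub_self]
    obtain ⟨c, hc⟩ := hker _ hz
    have hav : (a.1 - b.1) v = 0 := by
      have ha : a.1 v = 0 := a.2
      have hb : b.1 v = 0 := b.2
      simp [LinearMap.sub_apply, ha, hb]
    rw [hc] at hav
    simp [hv] at hav
    rw [hav] at hc
    ext x
    have := congrFun (congrArg DFunLike.coe hc) x
    simp at this
    linarith [this]
  have hranktau : Module.finrank ℝ W = n := by
    have : LinearMap.range τ = ⊤ := by
      rw [LinearMap.range_eq_top]
      intro r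
      obtain ⟨x, hx⟩ : ∃ x, τ x ≠ 0 := by
        by_contra hc
        push_neg at hc
        exact hτ (LinearMap.ext fun x => hc x)
      exact ⟨(r / τ x) • x, by simp [hx, div_mul_cancel₀]⟩
    have h1 := LinearMap.finrank_range_add_finrank_ker τ
    rw [this] at h1
    simp [hdim] at h1
    rw [hW]
    omega
  have hrankA : Module.finrank ℝ A = n := by
    have hev : (Module.Dual.eval ℝ V v) ≠ 0 := by
      intro hc
      have := congrFun (congrArg DFunLike.coe hc) τ
      simp [hv] at this
    have : LinearMap.range (Module.Dual.eval ℝ V v) = ⊤ := by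
      rw [LinearMap.range_eq_top]
      intro r
      refine ⟨r • τ, by simp [hv]⟩
    have h1 := LinearMap.finrank_range_add_finrank_ker (Module.Dual.eval ℝ V v)
    rw [this] at h1
    have hdual : Module.finrank ℝ (Module.Dual ℝ V) = n + 1 := by
      rw [Subspace.dual_finrank_eq, hdim]
    simp [hdual] at h1
    rw [hA]
    omega
  have fsurj : Function.Surjective f :=
    (LinearMap.injective_iff_surjective_of_finrank_eq_finrank (V := A) (V₂ := W)
      (by rw [hrankA, hranktau])).mp finj
  set e : A ≃ₗ[ℝ] W := LinearEquiv.ofBijective f ⟨finj, fsurj⟩ with he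
  have hPW : ∀ X, P X ∈ W := fun X => hτP X
  set Pw : V →ₗ[ℝ] W := P.codRestrict W hPW with hPw
  set hcov : V →ₗ[ℝ] Module.Dual ℝ V :=
    A.subtype ∘ₗ (e.symm : W →ₗ[ℝ] A) ∘ₗ Pw with hhcov
  have hcovA : ∀ X, hcov X ∈ A := fun X => (e.symm (Pw X)).2
  have hcovv0 : ∀ X, hcov X v = 0 := fun X => hcovA X
  have key : ∀ X, h (hcov X) = P X := by
    intro X
    have : f (e.symm (Pw X)) = Pw X := e.apply_symm_apply (Pw X)
    have := congrArg Subtype.val this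
    simpa [hfval, hhcov, hPw] using this
  have hsym : ∀ X Y : V, hcov X Y = hcov Y X := by
    intro X Y
    have hX : hcov X Y = hcov X (P Y) := by
      rw [hPv]
      simp [map_sub, map_smul, hcovv0]
    have hY : hcov Y X = hcov Y (P X) := by
      rw [hPv]
      simp [map_sub, map_smul, hcovv0]
    rw [hX, hY, ← key Y, ← key X, hsymm]
  refine ⟨hcov, ⟨hsym, ?_, ?_⟩, ?_⟩
  · ext Y
    have := hsym v Y
    rw [hcovv0 Y] at this
    simpa using this
  · ext X
    exact key X
  · rintro g ⟨gsym, gv, gcomp⟩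
    ext X Y
    have hg : ∀ Z, h (g Z) = P Z := fun Z => congrFun (congrArg DFunLike.coe gcomp) Z
    have hd : h (g X - hcov X) = 0 := by
      rw [map_sub, hg, key, sub_self]
    obtain ⟨c, hc⟩ := hker _ hd
    have hcv : (g X - hcov X) v = c * τ v := by rw [hc]; rfl
    have hgXv : g X v = 0 := by
      rw [gsym X v, gv]; rfl
    rw [hv, mul_one] at hcv
    simp [hgXv, hcovv0] at hcv
    have := congrFun (congrArg DFunLike.coe hc) Y
    simp [← hcv] at this
    linarith [this]
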